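/- arXiv:1003.0411 — 3 statements merged into one kernel-verified Lean document; each statement's English description precedes it below -/
import Mathlib

section
/- Let A be an element of GL(2,ℤ) of infinite order that has 1 or −1 as an eigenvalue, i.e. det(A − I) = 0 or det(A + I) = 0. Then there exist P ∈ GL(2,ℤ), a sign ε ∈ {1, −1}, and a nonzero integer n such that P·A·P⁻¹ = ε·[[1,n],[0,1]]. -/
/-- An infinite-order element of `GL(2, ℤ)` with eigenvalue `1` or `-1` (a reducible
toral automorphism) is conjugate in `GL(2, ℤ)` to `±[[1, n], [0, 1]]` for some
nonzero integer `n`. -/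
theorem reducible_toral_normal_form (A : GL (Fin 2) ℤ)
    (hinf : ¬ IsOfFinOrder A)
    (heig : Matrix.det ((A : Matrix (Fin 2) (Fin 2) ℤ) - 1) = 0 ∨
            Matrix.det ((A : Matrix (Fin 2) (Fin 2) ℤ) + 1) = 0) :
    ∃ P : GL (Fin 2) ℤ, ∃ ε : ℤ, (ε = 1 ∨ ε = -1) ∧ ∃ n : ℤ, n ≠ 0 ∧
      ((P * A * P⁻¹ : GL (Fin 2) ℤ) : Matrix (Fin 2) (Fin 2) ℤ) = ε • !![1, n; 0, 1] := by
  set M : Matrix (Fin 2) (Fin 2) ℤ := (A : Matrix (Fin 2) (Fin 2) ℤ) with hMdef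
  have hsq : ¬ (M * M = 1) := by
    intro h
    apply hinf
    refine isOfFinOrder_iff_pow_eq_one.mpr ⟨2, by norm_num, ?_⟩
    exact Units.ext (by simpa [sq, Units.val_pow_eq_pow_val] using h)
  obtain ⟨ε, hε, hdet1⟩ : ∃ ε : ℤ, (ε = 1 ∨ ε = -1) ∧ (ε • M - 1).det = 0 := by
    rcases heig with h | h
    · exact ⟨1, Or.inl rfl, by simpa using h⟩
    · refine ⟨-1, Or.inr rfl, ?_⟩
      have h2 : (-1 : ℤ) • M - 1 = -(M + 1) := by
        simp only [neg_smul, one_smul, sub_eq_add_neg, neg_add]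
      rw [h2, Matrix.det_neg]
      simpa using h
  have hεε : ε * ε = 1 := by rcases hε with h | h <;> subst h <;> norm_num
  set B : Matrix (Fin 2) (Fin 2) ℤ := ε • M with hBdef
  have hMB : M = ε • B := by
    rw [hBdef, smul_smul, hεε, one_smul]
  have hBB : B * B = M * M := by
    rw [hBdef, Matrix.smul_mul, Matrix.mul_smul, smul_smul, hεε, one_smul]
  obtain ⟨a, b, c, d, hBe⟩ : ∃ a b c d, B = !![a, b; c, d] :=
    ⟨_, _, _, _, Matrix.eta_fin_two B⟩
  have hsub : B - 1 = !![a - 1, b; c, d - 1] := by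
    rw [hBe, Matrix.one_fin_two]
    ext i j
    fin_cases i <;> fin_cases j <;> simp
  have hd1 : (a - 1) * (d - 1) - b * c = 0 := by
    have h := hdet1
    rw [hsub, Matrix.det_fin_two_of] at h
    exact h
  have hdetB : a * d - b * c = 1 ∨ a * d - b * c = -1 := by
    have hu : IsUnit M := ⟨A, rfl⟩
    have hud : IsUnit M.det := (Matrix.isUnit_iff_isUnit_det M).mp hu
    have hMd : M.det = 1 ∨ M.det = -1 := Int.isUnit_iff.mp hud
    have hBM : B.det = M.det := by
      rw [hBdef, Matrix.det_smul, Fintype.card_fin, show ε ^ 2 = 1 from by rw [sq]; exact hεε,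
        one_mul]
    rw [hBe, Matrix.det_fin_two_of] at hBM
    rw [hBM]; exact hMd
  rcases hdetB with hdet | hdet
  · -- det B = 1, trace 2
    have htr : a + d = 2 := by linear_combination hdet - hd1
    obtain ⟨α, hαd⟩ : ∃ x : ℤ, a = 1 + x := ⟨a - 1, by ring⟩
    have hda : d = 1 - α := by omega
    have hrel : α * α + b * c = 0 := by
      subst hαd hda; linear_combination -hdet
    by_cases hc0 : c = 0
    · have hα0 : α = 0 := by
        have h0 : α * α = 0 := by rw [hc0] at hrel; linarith
        exact mul_self_eq_zero.mp h0
      have hb0 : b ≠ 0 := by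
        intro hb0
        apply hsq
        have hB1 : B = 1 := by
          rw [hBe, hb0, hc0, show a = 1 by omega, show d = 1 by omega]
          exact Matrix.one_fin_two.symm
        rw [← hBB, hB1, one_mul]
      refine ⟨1, ε, hε, b, hb0, ?_⟩
      have h1 : ((1 * A * 1⁻¹ : GL (Fin 2) ℤ) : Matrix (Fin 2) (Fin 2) ℤ) = M := by
        simp [hMdef]
      rw [h1, hMB, hBe, hc0, show a = 1 by omega, show d = 1 by omega]
    · -- c ≠ 0 : conjugate kernel vector (α, c) to e₁
      set G : ℤ := (Int.gcd α c : ℤ) with hG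
      have hGne : G ≠ 0 := by
        simp only [hG, ne_eq, Nat.cast_eq_zero, Int.gcd_eq_zero_iff]
        tauto
      set p : ℤ := α / G with hp
      set q : ℤ := c / G with hq
      have hαp : G * p = α := Int.mul_ediv_cancel' (Int.gcd_dvd_left α c)
      have hcq : G * q = c := Int.mul_ediv_cancel' (Int.gcd_dvd_right α c)
      have hcop : IsCoprime p q := by
        rw [Int.isCoprime_iff_gcd_eq_one]
        exact Int.gcd_div_gcd_div_gcd (Nat.pos_of_ne_zero (by
          intro h0; exact hGne (by simp [hG, h0])))
      obtain ⟨s, t, hst⟩ := hcop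
      have hcross : p * c = q * α := by linear_combination q * hαp - p * hcq
      have hrel' : p * α + q * b = 0 := by
        have h0 : G * (p * α + q * b) = 0 := by linear_combination α * hαp + b * hcq + hrel
        rcases mul_eq_zero.mp h0 with h | h
        · exact absurd h hGne
        · exact h
      set Q : Matrix (Fin 2) (Fin 2) ℤ := !![p, -t; q, s] with hQ
      set Qi : Matrix (Fin 2) (Fin 2) ℤ := !![s, t; -q, p] with hQi
      have hQQi : Q * Qi = 1 := by
        rw [hQ, hQi, Matrix.mul_fin_two, Matrix.one_fin_two]
        ext i j
        fin_cases i <;> fin_cases j <;> simp <;>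
          first | ring1 | linear_combination hst
      have hQiQ : Qi * Q = 1 := by
        rw [hQ, hQi, Matrix.mul_fin_two, Matrix.one_fin_two]
        ext i j
        fin_cases i <;> fin_cases j <;> simp <;>
          first | ring1 | linear_combination hst
      set n : ℤ := s * s * b - t * t * c - 2 * s * t * α with hn
      have hkey : Qi * B * Q = !![1, n; 0, 1] := by
        rw [hQi, hBe, hαd, hda, Matrix.mul_fin_two, hQ, Matrix.mul_fin_two]
        ext i j
        fin_cases i <;> fin_cases j <;> simp [hn] <;>
          first
            | linear_combination s * hrel' + t * hcross + hst
            | linear_combination p * hcross - q * hrel'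
            | linear_combination hst - t * hcross - s * hrel'
            | ring1
      have hn0 : n ≠ 0 := by
        intro h0n
        apply hsq
        have hBQ : B * Q = Q * !![1, n; 0, 1] := by
          have h3 := congrArg (fun X => Q * X) hkey
          simpa only [← Matrix.mul_assoc, hQQi, one_mul] using h3
        have h1 : B * Q = Q := by
          rw [hBQ, h0n, show !![(1:ℤ), 0; 0, 1] = 1 from Matrix.one_fin_two.symm, mul_one]
        have hB1 : B = 1 := by
          calc B = B * (Q * Qi) := by rw [hQQi, mul_one]
            _ = (B * Q) * Qi := by rw [Matrix.mul_assoc]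
            _ = Q * Qi := by rw [h1]
            _ = 1 := hQQi
        rw [← hBB, hB1, one_mul]
      refine ⟨⟨Q, Qi, hQQi, hQiQ⟩⁻¹, ε, hε, n, hn0, ?_⟩
      have hval : (((⟨Q, Qi, hQQi, hQiQ⟩ : GL (Fin 2) ℤ)⁻¹ * A *
          ((⟨Q, Qi, hQQi, hQiQ⟩ : GL (Fin 2) ℤ)⁻¹)⁻¹ : GL (Fin 2) ℤ) :
          Matrix (Fin 2) (Fin 2) ℤ) = Qi * M * Q := by
        rw [inv_inv]
        rfl
      rw [hval, hMB, Matrix.mul_smul, Matrix.smul_mul, hkey]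
  · exfalso
    have htr : a + d = 0 := by linear_combination hdet - hd1
    apply hsq
    rw [← hBB, hBe, Matrix.mul_fin_two]
    have e1 : a * a + b * c = 1 := by linear_combination a * htr - hdet
    have e2 : a * b + b * d = 0 := by linear_combination b * htr
    have e3 : c * a + d * c = 0 := by linear_combination c * htr
    have e4 : c * b + d * d = 1 := by linear_combination d * htr - hdet
    rw [e1, e2, e3, e4]
    exact Matrix.one_fin_two.symm
end

section
/- Let A and B be 2×2 integer matrices with det A = det B = 1, tr A > 2 and tr B > 2, and let λ(A) = (tr A + √((tr A)² − 4))/2 and λ(B) = (tr B + √((tr B)² − 4))/2. If there exist positive integers k₁, k₂ with λ(A)^{k₁} = λ(B)^{k₂}, then A^{k₁} and B^{k₂} have equal characteristic polynomials, and there exists an invertible 2×2 rational matrix P such that P·A^{k₁}·P⁻¹ = B^{k₂} (as matrices over ℚ). -/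
open Matrix Polynomial

/-- Characteristic polynomial of a 2×2 matrix. -/
lemma my_charpoly_fin_two {R : Type*} [CommRing R] (M : Matrix (Fin 2) (Fin 2) R) :
    M.charpoly = X ^ 2 - C M.trace * X + C M.det := by
  rw [Matrix.charpoly, Matrix.det_fin_two, Matrix.charmatrix_apply_eq,
    Matrix.charmatrix_apply_eq, Matrix.charmatrix_apply_ne _ _ _ (by decide),
    Matrix.charmatrix_apply_ne _ _ _ (by decide), Matrix.trace_fin_two, Matrix.det_fin_two]
  simp only [Polynomial.C_mul, Polynomial.C_sub, Polynomial.C_add]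
  ring

/-- Cayley–Hamilton for 2×2 matrices with determinant 1. -/
lemma my_sq_eq {R : Type*} [CommRing R] (M : Matrix (Fin 2) (Fin 2) R) (hd : M.det = 1) :
    M ^ 2 = M.trace • M - 1 := by
  have h := Matrix.aeval_self_charpoly M
  rw [my_charpoly_fin_two M, hd] at h
  simp only [map_add, map_sub, _root_.map_mul, map_pow, aeval_X, aeval_C, _root_.map_one] at h
  have halg : (algebraMap R (Matrix (Fin 2) (Fin 2) R)) M.trace * M = M.trace • M := by
    rw [Algebra.algebraMap_eq_smul_one, smul_mul_assoc, one_mul]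
  rw [halg] at h
  rw [sub_add, sub_eq_zero] at h
  rw [h]

lemma my_trace_pow (A : Matrix (Fin 2) (Fin 2) ℤ) (hd : A.det = 1) (μ : ℝ)
    (hμ : μ ^ 2 = (A.trace : ℝ) * μ - 1) (hμ0 : μ ≠ 0) :
    ∀ n : ℕ, ((A ^ n).trace : ℝ) = μ ^ n + μ⁻¹ ^ n := by
  have hrec : ∀ n : ℕ, (A ^ (n + 2)).trace = A.trace * (A ^ (n + 1)).trace - (A ^ n).trace := by
    intro n
    have : A ^ (n + 2) = A.trace • A ^ (n + 1) - A ^ n := by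
      calc A ^ (n + 2) = A ^ n * A ^ 2 := pow_add A n 2
        _ = A ^ n * (A.trace • A - 1) := by rw [my_sq_eq A hd]
        _ = A.trace • (A ^ n * A) - A ^ n := by
            rw [Matrix.mul_sub, Matrix.mul_smul, Matrix.mul_one]
        _ = A.trace • A ^ (n + 1) - A ^ n := by rw [pow_succ]
    rw [this, Matrix.trace_sub, Matrix.trace_smul, smul_eq_mul]
  have hinv : μ⁻¹ = (A.trace : ℝ) - μ := by
    field_simp
    first
      | linear_combination hμ | linear_combination -hμ
      | linear_combination 2*hμ | linear_combination -2*hμ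
  have key : ∀ n : ℕ, ((A ^ n).trace : ℝ) = μ ^ n + μ⁻¹ ^ n ∧
      ((A ^ (n + 1)).trace : ℝ) = μ ^ (n + 1) + μ⁻¹ ^ (n + 1) := by
    intro n
    induction n with
    | zero =>
      constructor
      · simp [Matrix.trace_fin_two, Matrix.one_apply]
        norm_num
      · simp [hinv]
    | succ m ih =>
      refine ⟨ih.2, ?_⟩
      have := hrec m
      have h2 : ((A ^ (m + 2)).trace : ℝ) =
          (A.trace : ℝ) * ((A ^ (m + 1)).trace : ℝ) - ((A ^ m).trace : ℝ) := by
        exact_mod_cast congrArg (Int.cast : ℤ → ℝ) this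
      rw [h2, ih.1, ih.2]
      have hinv2 : μ⁻¹ ^ 2 = (A.trace : ℝ) * μ⁻¹ - 1 := by
        rw [hinv]; ring_nf;
        first
          | linear_combination hμ | linear_combination -hμ
          | linear_combination 2*hμ | linear_combination -2*hμ
      ring_nf
      first
        | linear_combination (μ ^ m) * hμ + (μ⁻¹ ^ m) * hinv2
        | linear_combination -((μ ^ m) * hμ) - (μ⁻¹ ^ m) * hinv2
  exact fun n => (key n).1

/-- A 2×2 matrix over a field that is not scalar (trace² ≠ 4·det) is conjugate to the
companion matrix of its characteristic polynomial. -/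
lemma my_conj_companion (M : Matrix (Fin 2) (Fin 2) ℚ) (h : M.trace ^ 2 ≠ 4 * M.det) :
    ∃ S : Matrix (Fin 2) (Fin 2) ℚ, IsUnit S.det ∧
      M * S = S * !![0, -M.det; 1, M.trace] := by
  set a := M 0 0 with ha
  set b := M 0 1 with hb
  set c := M 1 0 with hc
  set d := M 1 1 with hd2
  have htr : M.trace = a + d := Matrix.trace_fin_two M
  have hdet : M.det = a * d - b * c := Matrix.det_fin_two M
  by_cases hcne : c ≠ 0
  · refine ⟨!![1, a; 0, c], ?_, ?_⟩
    · rw [Matrix.det_fin_two_of]; simpa using hcne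
    · ext i j
      fin_cases i <;> fin_cases j <;>
        simp [Matrix.mul_apply, Fin.sum_univ_two, htr, hdet, ← ha, ← hb, ← hc, ← hd2] <;> ring
  · push_neg at hcne
    by_cases hbne : b ≠ 0
    · refine ⟨!![0, b; 1, d], ?_, ?_⟩
      · rw [Matrix.det_fin_two_of]; simpa using hbne
      · ext i j
        fin_cases i <;> fin_cases j <;>
          simp [Matrix.mul_apply, Fin.sum_univ_two, htr, hdet, ← ha, ← hb, ← hc, ← hd2,
            hcne] <;> ring
    · push_neg at hbne
      have had : a ≠ d := by
        intro hh
        apply h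
        rw [htr, hdet, hbne, hcne, hh]; ring
      refine ⟨!![1, a; 1, d], ?_, ?_⟩
      · rw [Matrix.det_fin_two_of]
        simpa [sub_ne_zero] using (Ne.symm had)
      · ext i j
        fin_cases i <;> fin_cases j <;>
          simp [Matrix.mul_apply, Fin.sum_univ_two, htr, hdet, ← ha, ← hb, ← hc, ← hd2,
            hcne, hbne] <;> ring

/-- If two Anosov matrices `A, B` (integer matrices with determinant `1` and trace
`> 2`) have dilatations satisfying `λ(A)^{k₁} = λ(B)^{k₂}` for some positive
integers `k₁, k₂`, then `A^{k₁}` and `B^{k₂}` have equal characteristic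
polynomials and are conjugate by an invertible rational matrix. -/
theorem anosov_equal_dilatation_powers_conjugate (A B : Matrix (Fin 2) (Fin 2) ℤ)
    (hdA : A.det = 1) (hdB : B.det = 1) (htA : 2 < A.trace) (htB : 2 < B.trace)
    (lamA lamB : ℝ)
    (hlamA : lamA = ((A.trace : ℝ) + Real.sqrt ((A.trace : ℝ) ^ 2 - 4)) / 2)
    (hlamB : lamB = ((B.trace : ℝ) + Real.sqrt ((B.trace : ℝ) ^ 2 - 4)) / 2)
    (k₁ k₂ : ℕ) (hk₁ : 0 < k₁) (hk₂ : 0 < k₂)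
    (hlam : lamA ^ k₁ = lamB ^ k₂) :
    (A ^ k₁).charpoly = (B ^ k₂).charpoly ∧
    ∃ P : Matrix (Fin 2) (Fin 2) ℚ, IsUnit P ∧
      P * (A.map (Int.cast : ℤ → ℚ)) ^ k₁ * P⁻¹ = (B.map (Int.cast : ℤ → ℚ)) ^ k₂ := by
  -- basic facts about λ
  have hquad : ∀ (C : Matrix (Fin 2) (Fin 2) ℤ), 2 < C.trace →
      ∀ μ : ℝ, μ = ((C.trace : ℝ) + Real.sqrt ((C.trace : ℝ) ^ 2 - 4)) / 2 →
      μ ^ 2 = (C.trace : ℝ) * μ - 1 ∧ 1 < μ := by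
    intro C htC μ hμ
    have ht : (2 : ℝ) < (C.trace : ℝ) := by exact_mod_cast htC
    have hnn : (0 : ℝ) ≤ (C.trace : ℝ) ^ 2 - 4 := by nlinarith
    have hs := Real.sq_sqrt hnn
    have hsnn := Real.sqrt_nonneg ((C.trace : ℝ) ^ 2 - 4)
    constructor
    · rw [hμ]; linear_combination hs / 4
    · rw [hμ]; nlinarith
  obtain ⟨hqA, hgA⟩ := hquad A htA lamA hlamA
  obtain ⟨hqB, hgB⟩ := hquad B htB lamB hlamB
  have hA0 : lamA ≠ 0 := by linarith
  have hB0 : lamB ≠ 0 := by linarith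
  have htrA := my_trace_pow A hdA lamA hqA hA0 k₁
  have htrB := my_trace_pow B hdB lamB hqB hB0 k₂
  -- equal traces
  have hinvpow : lamA⁻¹ ^ k₁ = lamB⁻¹ ^ k₂ := by
    rw [inv_pow, inv_pow, hlam]
  have htraceR : (((A ^ k₁).trace : ℤ) : ℝ) = (((B ^ k₂).trace : ℤ) : ℝ) := by
    rw [htrA, htrB, hlam, hinvpow]
  have htrace : (A ^ k₁).trace = (B ^ k₂).trace := by exact_mod_cast htraceR
  have hdetA : (A ^ k₁).det = 1 := by rw [Matrix.det_pow, hdA, one_pow]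
  have hdetB : (B ^ k₂).det = 1 := by rw [Matrix.det_pow, hdB, one_pow]
  have hcp : (A ^ k₁).charpoly = (B ^ k₂).charpoly := by
    rw [my_charpoly_fin_two, my_charpoly_fin_two, htrace, hdetA, hdetB]
  refine ⟨hcp, ?_⟩
  -- trace of the power is > 2
  have hgt : 2 < (A ^ k₁).trace := by
    have hx : 1 < lamA ^ k₁ := one_lt_pow₀ hgA hk₁.ne'
    have hx0 : (0 : ℝ) < lamA ^ k₁ := by linarith
    have hxi : lamA ^ k₁ * (lamA ^ k₁)⁻¹ = 1 := mul_inv_cancel₀ (ne_of_gt hx0)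
    have hkey : (2 : ℝ) < lamA ^ k₁ + lamA⁻¹ ^ k₁ := by
      rw [inv_pow]
      nlinarith [hxi]
    have h2 : (2 : ℝ) < (((A ^ k₁).trace : ℤ) : ℝ) := by rw [htrA]; exact hkey
    exact_mod_cast h2
  -- rational matrices
  set M : Matrix (Fin 2) (Fin 2) ℚ := (A.map (Int.cast : ℤ → ℚ)) ^ k₁ with hM
  set N : Matrix (Fin 2) (Fin 2) ℚ := (B.map (Int.cast : ℤ → ℚ)) ^ k₂ with hN
  have hmapA : M = (A ^ k₁).map (Int.cast : ℤ → ℚ) := by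
    rw [hM]
    exact_mod_cast (map_pow ((Int.castRingHom ℚ).mapMatrix) A k₁).symm
  have hmapB : N = (B ^ k₂).map (Int.cast : ℤ → ℚ) := by
    rw [hN]
    exact_mod_cast (map_pow ((Int.castRingHom ℚ).mapMatrix) B k₂).symm
  have htrM : M.trace = (((A ^ k₁).trace : ℤ) : ℚ) := by
    rw [hmapA, Matrix.trace_fin_two, Matrix.trace_fin_two]
    simp [Matrix.map_apply]
  have htrN : N.trace = (((B ^ k₂).trace : ℤ) : ℚ) := by
    rw [hmapB, Matrix.trace_fin_two, Matrix.trace_fin_two]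
    simp [Matrix.map_apply]
  have hdetM : M.det = 1 := by
    have := (RingHom.map_det (Int.castRingHom ℚ) (A ^ k₁)).symm
    rw [hmapA]
    rw [show (A ^ k₁).map (Int.cast : ℤ → ℚ) = (Int.castRingHom ℚ).mapMatrix (A ^ k₁) from rfl,
      ← RingHom.map_det, hdetA]
    exact RingHom.map_one _
  have hdetN : N.det = 1 := by
    rw [hmapB]
    rw [show (B ^ k₂).map (Int.cast : ℤ → ℚ) = (Int.castRingHom ℚ).mapMatrix (B ^ k₂) from rfl,
      ← RingHom.map_det, hdetB]
    exact RingHom.map_one _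
  have hMns : M.trace ^ 2 ≠ 4 * M.det := by
    rw [htrM, hdetM]
    intro hh
    have : (((A ^ k₁).trace : ℤ) : ℚ) ^ 2 = 4 := by rw [hh]; ring
    have h4 : ((A ^ k₁).trace) ^ 2 = 4 := by exact_mod_cast this
    nlinarith
  have hNns : N.trace ^ 2 ≠ 4 * N.det := by
    rw [htrN, hdetN, ← htrace]
    intro hh
    have : (((A ^ k₁).trace : ℤ) : ℚ) ^ 2 = 4 := by rw [hh]; ring
    have h4 : ((A ^ k₁).trace) ^ 2 = 4 := by exact_mod_cast this
    nlinarith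
  obtain ⟨S, hSu, hSeq⟩ := my_conj_companion M hMns
  obtain ⟨T, hTu, hTeq⟩ := my_conj_companion N hNns
  have hsame : (!![0, -M.det; 1, M.trace] : Matrix (Fin 2) (Fin 2) ℚ) =
      !![0, -N.det; 1, N.trace] := by
    rw [hdetM, hdetN, htrM, htrN, htrace]
  -- P := T * S⁻¹
  refine ⟨T * S⁻¹, ?_, ?_⟩
  · exact (Matrix.isUnit_iff_isUnit_det _).mpr
      (by rw [Matrix.det_mul]; exact hTu.mul (Matrix.isUnit_nonsing_inv_det _ hSu))
  · have hTu' : IsUnit T.det := hTu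
    have hPinv : (T * S⁻¹)⁻¹ = S * T⁻¹ := by
      rw [Matrix.mul_inv_rev, Matrix.nonsing_inv_nonsing_inv _ hSu]
    rw [hPinv]
    -- T * S⁻¹ * M * (S * T⁻¹) = N
    have h1 : S⁻¹ * M * S = !![0, -M.det; 1, M.trace] := by
      rw [Matrix.mul_assoc, hSeq, ← Matrix.mul_assoc, Matrix.nonsing_inv_mul _ hSu,
        Matrix.one_mul]
    have h2 : T * !![0, -N.det; 1, N.trace] * T⁻¹ = N := by
      rw [← hTeq, Matrix.mul_assoc, Matrix.mul_nonsing_inv _ hTu, Matrix.mul_one]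
    calc T * S⁻¹ * M * (S * T⁻¹) = T * (S⁻¹ * M * S) * T⁻¹ := by
          simp only [Matrix.mul_assoc]
      _ = T * !![0, -N.det; 1, N.trace] * T⁻¹ := by rw [h1, hsame]
      _ = N := h2
end

section
/- Let A be a 2×2 integer matrix with det A = 1 and tr A > 2 (an Anosov matrix), and let B be an element of GL(2,ℤ) that either has finite order or has 1 or −1 as an eigenvalue (i.e. det(B − I) = 0 or det(B + I) = 0). Then for all nonzero integers k₁, k₂, the matrices A^{k₁} and B^{k₂} are not conjugate by any invertible 2×2 rational matrix. -/
open Matrix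

-- Cayley-Hamilton for 2x2
theorem ch2 {R : Type*} [CommRing R] (M : Matrix (Fin 2) (Fin 2) R) :
    M * M = M.trace • M - M.det • 1 := by
  ext i j
  fin_cases i <;> fin_cases j <;>
    simp [Matrix.mul_apply, Fin.sum_univ_two, Matrix.trace_fin_two, Matrix.det_fin_two,
      Matrix.one_apply] <;> ring

theorem pow_rec (M : Matrix (Fin 2) (Fin 2) ℚ) (n : ℕ) :
    M ^ (n + 2) = M.trace • M ^ (n + 1) - M.det • M ^ n := by
  have h : M ^ (n + 2) = M ^ n * (M * M) := by
    rw [pow_add, pow_two]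
  rw [h, ch2, Matrix.mul_sub, mul_smul_comm, mul_smul_comm, Matrix.mul_one, ← pow_succ]

theorem trace_smul' (c : ℚ) (M : Matrix (Fin 2) (Fin 2) ℚ) : (c • M).trace = c * M.trace := by
  simp [Matrix.trace_smul, smul_eq_mul]

theorem trace_pow_gt (M : Matrix (Fin 2) (Fin 2) ℚ) (hd : M.det = 1) (ht : 2 < M.trace) :
    ∀ n : ℕ, 2 < (M ^ (n + 1)).trace ∧ (M ^ n).trace < (M ^ (n + 1)).trace := by
  intro n
  induction n with
  | zero =>
    constructor
    · simpa using ht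
    · simpa [Matrix.trace_one] using ht
  | succ n ih =>
    have hrec := congrArg Matrix.trace (pow_rec M n)
    rw [Matrix.trace_sub, trace_smul'] at hrec
    rw [hd] at hrec
    simp only [one_smul] at hrec
    constructor <;> nlinarith [ih.1, ih.2]

theorem trace_pow_nat_gt (M : Matrix (Fin 2) (Fin 2) ℚ) (hd : M.det = 1) (ht : 2 < M.trace)
    {n : ℕ} (hn : n ≠ 0) : 2 < (M ^ n).trace := by
  obtain ⟨m, rfl⟩ := Nat.exists_eq_succ_of_ne_zero hn
  exact (trace_pow_gt M hd ht m).1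

theorem trace_pow_eq2 (M : Matrix (Fin 2) (Fin 2) ℚ) (hd : M.det = 1) (ht : M.trace = 2) :
    ∀ n : ℕ, (M ^ n).trace = 2 ∧ (M ^ (n + 1)).trace = 2 := by
  intro n
  induction n with
  | zero =>
    constructor
    · simp [Matrix.trace_one]
    · simpa using ht
  | succ n ih =>
    refine ⟨ih.2, ?_⟩
    have hrec := congrArg Matrix.trace (pow_rec M n)
    rw [Matrix.trace_sub, trace_smul'] at hrec
    rw [hd, ht] at hrec
    simp only [one_smul] at hrec
    rw [hrec, ih.1, ih.2]
    ring

theorem inv_facts (M : Matrix (Fin 2) (Fin 2) ℚ) (hd : M.det = 1) :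
    M⁻¹.trace = M.trace ∧ M⁻¹.det = 1 := by
  have hinv : M⁻¹ = M.adjugate := by
    rw [Matrix.inv_def, hd]; simp
  constructor
  · rw [hinv, Matrix.adjugate_fin_two]
    simp [Matrix.trace_fin_two]
    ring
  · rw [hinv, Matrix.det_adjugate, hd, one_pow]

theorem trace_zpow_gt (M : Matrix (Fin 2) (Fin 2) ℚ) (hd : M.det = 1) (ht : 2 < M.trace)
    {k : ℤ} (hk : k ≠ 0) : 2 < (M ^ k).trace := by
  rcases Int.natAbs_eq k with h | h
  · rw [h, zpow_natCast]
    exact trace_pow_nat_gt M hd ht (by simpa using hk)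
  · rw [h, Matrix.zpow_neg_natCast, ← Matrix.inv_pow']
    obtain ⟨h1, h2⟩ := inv_facts M hd
    exact trace_pow_nat_gt M⁻¹ h2 (h1 ▸ ht) (by simpa using hk)

theorem trace_zpow_eq2 (M : Matrix (Fin 2) (Fin 2) ℚ) (hd : M.det = 1) (ht : M.trace = 2)
    (k : ℤ) : (M ^ k).trace = 2 := by
  rcases Int.natAbs_eq k with h | h
  · rw [h, zpow_natCast]
    exact (trace_pow_eq2 M hd ht _).1
  · rw [h, Matrix.zpow_neg_natCast, ← Matrix.inv_pow']
    obtain ⟨h1, h2⟩ := inv_facts M hd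
    exact (trace_pow_eq2 M⁻¹ h2 (h1 ▸ ht) _).1

theorem conj_pow' {P X : Matrix (Fin 2) (Fin 2) ℚ} (hP : IsUnit P) (n : ℕ) :
    (P * X * P⁻¹) ^ n = P * X ^ n * P⁻¹ := by
  have hPd : IsUnit P.det := (Matrix.isUnit_iff_isUnit_det P).mp hP
  induction n with
  | zero => simp [Matrix.mul_nonsing_inv P hPd]
  | succ n ih =>
    rw [pow_succ, ih, pow_succ]
    have : P * X ^ n * P⁻¹ * (P * X * P⁻¹) = P * X ^ n * (P⁻¹ * P) * X * P⁻¹ := by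
      noncomm_ring
    rw [this, Matrix.nonsing_inv_mul P hPd, Matrix.mul_one, Matrix.mul_assoc P _ X]

theorem myTraceConj {P X : Matrix (Fin 2) (Fin 2) ℚ} (hP : IsUnit P) :
    (P * X * P⁻¹).trace = X.trace := by
  have hPd : IsUnit P.det := (Matrix.isUnit_iff_isUnit_det P).mp hP
  rw [Matrix.trace_mul_comm, ← Matrix.mul_assoc, Matrix.nonsing_inv_mul P hPd, Matrix.one_mul]

theorem trace_mapQ (X : Matrix (Fin 2) (Fin 2) ℤ) :
    (X.map (Int.cast : ℤ → ℚ)).trace = (X.trace : ℚ) := by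
  simp [Matrix.trace_fin_two, Matrix.map_apply]

theorem det_mapQ (X : Matrix (Fin 2) (Fin 2) ℤ) :
    (X.map (Int.cast : ℤ → ℚ)).det = (X.det : ℚ) := by
  simp [Matrix.det_fin_two, Matrix.map_apply]

theorem det_sub_one (X : Matrix (Fin 2) (Fin 2) ℤ) :
    (X - 1).det = X.det - X.trace + 1 := by
  simp [Matrix.det_fin_two, Matrix.trace_fin_two, Matrix.sub_apply, Matrix.one_apply]
  ring

theorem det_add_one (X : Matrix (Fin 2) (Fin 2) ℤ) :
    (X + 1).det = X.det + X.trace + 1 := by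
  simp [Matrix.det_fin_two, Matrix.trace_fin_two, Matrix.add_apply, Matrix.one_apply]
  ring

theorem trace_sq (X : Matrix (Fin 2) (Fin 2) ℤ) :
    (X * X).trace = X.trace ^ 2 - 2 * X.det := by
  simp [Matrix.trace_fin_two, Matrix.mul_apply, Fin.sum_univ_two, Matrix.det_fin_two]
  ring

/-- An Anosov matrix `A` (integer matrix with determinant `1` and trace `> 2`) is
never commensurable with a periodic or reducible element `B` of `GL(2, ℤ)` (one of
finite order, or with eigenvalue `±1`): no nonzero powers `A^{k₁}` and `B^{k₂}` are
conjugate by an invertible rational matrix. -/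
theorem anosov_not_commensurable_periodic_or_reducible
    (A : Matrix (Fin 2) (Fin 2) ℤ) (hdA : A.det = 1) (htA : 2 < A.trace)
    (B : GL (Fin 2) ℤ)
    (hB : IsOfFinOrder B ∨
          Matrix.det ((B : Matrix (Fin 2) (Fin 2) ℤ) - 1) = 0 ∨
          Matrix.det ((B : Matrix (Fin 2) (Fin 2) ℤ) + 1) = 0) :
    ∀ k₁ k₂ : ℤ, k₁ ≠ 0 → k₂ ≠ 0 →
      ¬ ∃ P : Matrix (Fin 2) (Fin 2) ℚ, IsUnit P ∧
        P * (A.map (Int.cast : ℤ → ℚ)) ^ k₁ * P⁻¹ =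
          ((B ^ k₂ : GL (Fin 2) ℤ) : Matrix (Fin 2) (Fin 2) ℤ).map (Int.cast : ℤ → ℚ) := by
  intro k₁ k₂ hk₁ hk₂
  rintro ⟨P, hP, hconj⟩
  set φ : Matrix (Fin 2) (Fin 2) ℤ →+* Matrix (Fin 2) (Fin 2) ℚ :=
    (Int.castRingHom ℚ).mapMatrix with hφ
  set ψ : GL (Fin 2) ℤ →* (Matrix (Fin 2) (Fin 2) ℚ)ˣ := Units.map φ.toMonoidHom with hψ
  set Mq : Matrix (Fin 2) (Fin 2) ℚ := A.map (Int.cast : ℤ → ℚ) with hMq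
  have hMd : Mq.det = 1 := by rw [hMq, det_mapQ, hdA]; norm_num
  have hMt : 2 < Mq.trace := by rw [hMq, trace_mapQ]; exact_mod_cast htA
  have hMdu : IsUnit Mq.det := by rw [hMd]; exact isUnit_one
  set βq : (Matrix (Fin 2) (Fin 2) ℚ)ˣ := ψ B with hβ
  have hβd : IsUnit ((↑βq : Matrix (Fin 2) (Fin 2) ℚ)).det :=
    (Matrix.isUnit_iff_isUnit_det _).mp βq.isUnit
  have hcoe : ∀ j : ℤ, (((B ^ j : GL (Fin 2) ℤ) : Matrix (Fin 2) (Fin 2) ℤ)).map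
      (Int.cast : ℤ → ℚ) = (↑βq : Matrix (Fin 2) (Fin 2) ℚ) ^ j := by
    intro j
    rw [← Matrix.coe_units_zpow, hβ, ← map_zpow ψ B j]
    rfl
  rw [hcoe k₂] at hconj
  have hkey : ∀ n : ℕ, (Mq ^ (k₁ * (n : ℤ))).trace =
      ((↑βq : Matrix (Fin 2) (Fin 2) ℚ) ^ (k₂ * (n : ℤ))).trace := by
    intro n
    have h1 := congrArg (fun X : Matrix (Fin 2) (Fin 2) ℚ => (X ^ n).trace) hconj
    rw [conj_pow' hP, trace_conj hP, ← zpow_natCast (Mq ^ k₁), ← Matrix.zpow_mul Mq hMdu,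
      ← zpow_natCast ((↑βq : Matrix (Fin 2) (Fin 2) ℚ) ^ k₂), ← Matrix.zpow_mul _ hβd] at h1
    exact h1
  rcases hB with hfin | hred
  · obtain ⟨n, hn, hBn⟩ := isOfFinOrder_iff_pow_eq_one.mp hfin
    have hone : B ^ (k₂ * (n : ℤ)) = 1 := by
      rw [mul_comm, _root_.zpow_mul, zpow_natCast, hBn, _root_.one_zpow]
    have h2 : ((↑βq : Matrix (Fin 2) (Fin 2) ℚ) ^ (k₂ * (n : ℤ))).trace = 2 := by
      rw [← Matrix.coe_units_zpow, hβ, ← map_zpow ψ B, hone]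
      simp [Matrix.trace_one]
    have h3 := hkey n
    rw [h2] at h3
    have h4 : 2 < (Mq ^ (k₁ * (n : ℤ))).trace :=
      trace_zpow_gt Mq hMd hMt (mul_ne_zero hk₁ (by exact_mod_cast hn.ne'))
    linarith
  · have hdu : IsUnit ((B : Matrix (Fin 2) (Fin 2) ℤ)).det :=
      (Matrix.isUnit_iff_isUnit_det _).mp B.isUnit
    have hd2 := Int.isUnit_iff.mp hdu
    have htr : ((B : Matrix (Fin 2) (Fin 2) ℤ)).trace ^ 2 -
        2 * (B : Matrix (Fin 2) (Fin 2) ℤ).det = 2 := by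
      rcases hred with h | h
      · rw [det_sub_one] at h
        rcases hd2 with h1 | h1 <;> nlinarith
      · rw [det_add_one] at h
        rcases hd2 with h1 | h1 <;> nlinarith
    have hCval : (↑βq : Matrix (Fin 2) (Fin 2) ℚ) ^ (2 : ℤ) =
        ((B : Matrix (Fin 2) (Fin 2) ℤ) * (B : Matrix (Fin 2) (Fin 2) ℤ)).map
          (Int.cast : ℤ → ℚ) := by
      rw [show (2 : ℤ) = ((2 : ℕ) : ℤ) from rfl, zpow_natCast, pow_two]
      exact (map_mul φ _ _).symm
    have hCd : ((↑βq : Matrix (Fin 2) (Fin 2) ℚ) ^ (2 : ℤ)).det = 1 := by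
      rw [hCval, det_mapQ, Matrix.det_mul]
      rcases hd2 with h1 | h1 <;> rw [h1] <;> norm_num
    have hCt : ((↑βq : Matrix (Fin 2) (Fin 2) ℚ) ^ (2 : ℤ)).trace = 2 := by
      rw [hCval, trace_mapQ, trace_sq, htr]
      norm_num
    have h3 := hkey 2
    rw [show k₂ * ((2 : ℕ) : ℤ) = (2 : ℤ) * k₂ by ring, Matrix.zpow_mul _ hβd,
      trace_zpow_eq2 _ hCd hCt k₂] at h3
    have h4 : 2 < (Mq ^ (k₁ * ((2 : ℕ) : ℤ))).trace :=
      trace_zpow_gt Mq hMd hMt (mul_ne_zero hk₁ (by norm_num))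
    linarith
end
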